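/- In a Best-of-3 game played under the Catch-Up Rule (loser of a point serves next), where A serves first, the probability that A wins is p(1-q) + p^2 q + (1-p)p(1-q) = 2p - p^2 - 2pq + 2p^2 q; in particular it equals the probability that A wins under the Standard Rule. -/
import Mathlib


/-- Win probability for player `A` in a service game played to `goal` points.
`next prevSrv aWon` gives the next server (`true` = A serves). `srv = true` means
A serves the current point; A wins on his serve with probability `p`, B wins on her
serve with probability `q`. `fuel` bounds the number of points played. -/
def winProb (p q : ℝ) (goal : ℕ) (next : Bool → Bool → Bool) :
    ℕ → ℕ → ℕ → Bool → ℝ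
  | 0, _, _, _ => 0
  | fuel + 1, x, y, srv =>
    if goal ≤ x then 1
    else if goal ≤ y then 0
    else
      (if srv then p else 1 - q) * winProb p q goal next fuel (x + 1) y (next srv true) +
        (1 - if srv then p else 1 - q) * winProb p q goal next fuel x (y + 1) (next srv false)

/-- Standard Rule: the winner of the point serves next. -/
def nextSR : Bool → Bool → Bool := fun _ aWon => aWon

/-- Catch-Up Rule: the loser of the point serves next. -/
def nextCR : Bool → Bool → Bool := fun _ aWon => !aWon

/-- In a Best-of-3 game under the Catch-Up Rule with A serving first, the probability
that A wins is `p(1-q) + p²q + (1-p)p(1-q) = 2p - p² - 2pq + 2p²q`, which equals the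
probability that A wins under the Standard Rule. -/
theorem bestOf3_CR_winProb (p q : ℝ) (hp0 : 0 < p) (hp1 : p < 1)
    (hq0 : 0 < q) (hq1 : q < 1) :
    winProb p q 2 nextCR 4 0 0 true
        = p * (1 - q) + p ^ 2 * q + (1 - p) * p * (1 - q) ∧
      winProb p q 2 nextCR 4 0 0 true
        = 2 * p - p ^ 2 - 2 * p * q + 2 * p ^ 2 * q ∧
      winProb p q 2 nextCR 4 0 0 true = winProb p q 2 nextSR 4 0 0 true := by
  refine ⟨?_, ?_, ?_⟩ <;> simp [winProb, nextCR, nextSR] <;> ring
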